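/- For the 32-dimensional Pathions with strut constant S satisfying 8 < S < 16, writing s = S − 8, the product (i_{f} + i_{16 + 8 + a})(i_8 − i_{16 + s}) equals zero, where (a, s, f) ranges over triples with f = a XOR s coming from a Sedenion strut (i.e., (f, a, s) an associative Octonion trip in CPO order with a, f < 8). -/

import Mathlib

noncomputable section

/-- Cayley-Dickson algebra of dimension `2^n` over `ℝ`, as iterated pairs. -/
@[reducible] def CD : ℕ → Type
  | 0 => ℝ
  | n+1 => CD n × CD n

def CDzero : (n : ℕ) → CD n
  | 0 => (0 : ℝ)
  | n+1 => (CDzero n, CDzero n)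

def CDadd : (n : ℕ) → CD n → CD n → CD n
  | 0, x, y => ((x + y : ℝ) : CD 0)
  | n+1, x, y => ((CDadd n (x : CD (n+1)).1 (y : CD (n+1)).1,
      CDadd n (x : CD (n+1)).2 (y : CD (n+1)).2) : CD (n+1))

def CDneg : (n : ℕ) → CD n → CD n
  | 0, x => ((-(x : ℝ) : ℝ) : CD 0)
  | n+1, x => (((CDneg n (x : CD (n+1)).1, CDneg n (x : CD (n+1)).2)) : CD (n+1))

def CDconj : (n : ℕ) → CD n → CD n
  | 0, x => x
  | n+1, x => (((CDconj n (x : CD (n+1)).1, CDneg n (x : CD (n+1)).2)) : CD (n+1))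

/-- Cayley-Dickson multiplication: `(a,b)(c,d) = (ac - d* b, d a + b c*)`. -/
def CDmul : (n : ℕ) → CD n → CD n → CD n
  | 0, x, y => ((x * y : ℝ) : CD 0)
  | n+1, x, y =>
      (((CDadd n (CDmul n (x : CD (n+1)).1 (y : CD (n+1)).1)
          (CDneg n (CDmul n (CDconj n (y : CD (n+1)).2) (x : CD (n+1)).2)),
        CDadd n (CDmul n (y : CD (n+1)).2 (x : CD (n+1)).1)
          (CDmul n (x : CD (n+1)).2 (CDconj n (y : CD (n+1)).1)))) : CD (n+1))

def CDsub (n : ℕ) (x y : CD n) : CD n := CDadd n x (CDneg n y)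

def CDsmul : (n : ℕ) → ℝ → CD n → CD n
  | 0, c, x => ((c * x : ℝ) : CD 0)
  | n+1, c, x => (((CDsmul n c (x : CD (n+1)).1, CDsmul n c (x : CD (n+1)).2)) : CD (n+1))

/-- The imaginary/basis unit `i_k` of the `2^n`-ions (`k < 2^n`); `i_0 = 1`. -/
def CDunit : (n : ℕ) → ℕ → CD n
  | 0, _ => ((1 : ℝ) : CD 0)
  | n+1, k =>
      if k < 2^n then (((CDunit n k, CDzero n)) : CD (n+1))
      else (((CDzero n, CDunit n (k - 2^n))) : CD (n+1))

/-- `(a,b,c)` is an associative triplet in cyclic positive order among the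
indices of the `2^n`-ions. -/
def IsCPO (n : ℕ) (a b c : ℕ) : Prop :=
  CDmul n (CDunit n a) (CDunit n b) = CDunit n c ∧
  CDmul n (CDunit n b) (CDunit n c) = CDunit n a ∧
  CDmul n (CDunit n c) (CDunit n a) = CDunit n b

lemma CDzero_succ (n : ℕ) : CDzero (n+1) = ((CDzero n, CDzero n) : CD (n+1)) := rfl

lemma CDadd_succ (n : ℕ) (x y : CD (n+1)) :
    CDadd (n+1) x y = ((CDadd n x.1 y.1, CDadd n x.2 y.2) : CD (n+1)) := rfl

lemma CDneg_succ (n : ℕ) (x : CD (n+1)) :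
    CDneg (n+1) x = ((CDneg n x.1, CDneg n x.2) : CD (n+1)) := rfl

lemma CDconj_succ (n : ℕ) (x : CD (n+1)) :
    CDconj (n+1) x = ((CDconj n x.1, CDneg n x.2) : CD (n+1)) := rfl

lemma CDmul_succ (n : ℕ) (x y : CD (n+1)) :
    CDmul (n+1) x y =
      ((CDadd n (CDmul n x.1 y.1) (CDneg n (CDmul n (CDconj n y.2) x.2)),
        CDadd n (CDmul n y.2 x.1) (CDmul n x.2 (CDconj n y.1))) : CD (n+1)) := rfl

lemma CDneg_zero : ∀ n, CDneg n (CDzero n) = CDzero n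
  | 0 => by simp [CDneg, CDzero]
  | n+1 => by simp [CDneg_succ, CDzero_succ, CDneg_zero n]

lemma CDconj_zero : ∀ n, CDconj n (CDzero n) = CDzero n
  | 0 => by simp [CDconj, CDzero]
  | n+1 => by simp [CDconj_succ, CDzero_succ, CDconj_zero n, CDneg_zero n]

lemma CDadd_zero : ∀ n (x : CD n), CDadd n x (CDzero n) = x
  | 0, x => by simp [CDadd, CDzero]
  | n+1, x => by simp [CDadd_succ, CDzero_succ, CDadd_zero n]

lemma CDzero_add : ∀ n (x : CD n), CDadd n (CDzero n) x = x
  | 0, x => by simp [CDadd, CDzero]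
  | n+1, x => by simp [CDadd_succ, CDzero_succ, CDzero_add n]

lemma CDmul_zero_both : ∀ n (x : CD n),
    CDmul n (CDzero n) x = CDzero n ∧ CDmul n x (CDzero n) = CDzero n
  | 0, x => by simp [CDmul, CDzero]
  | n+1, x => by
    simp [CDmul_succ, CDzero_succ, CDconj_zero n, CDneg_zero n,
      (CDmul_zero_both n _).1, (CDmul_zero_both n _).2,
      CDadd_zero n, CDzero_add n]

lemma CDzero_mul (n : ℕ) (x : CD n) : CDmul n (CDzero n) x = CDzero n :=
  (CDmul_zero_both n x).1

lemma CDmul_zero (n : ℕ) (x : CD n) : CDmul n x (CDzero n) = CDzero n :=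
  (CDmul_zero_both n x).2

lemma CDadd_neg : ∀ n (x : CD n), CDadd n x (CDneg n x) = CDzero n
  | 0, x => by simp [CDadd, CDneg, CDzero]
  | n+1, x => by simp [CDadd_succ, CDneg_succ, CDzero_succ, CDadd_neg n]

lemma CDneg_neg : ∀ n (x : CD n), CDneg n (CDneg n x) = x
  | 0, x => by simp [CDneg]
  | n+1, x => by simp [CDneg_succ, CDneg_neg n]

lemma CDneg_add_self (n : ℕ) (x : CD n) : CDadd n (CDneg n x) x = CDzero n := by
  have := CDadd_neg n (CDneg n x)
  rwa [CDneg_neg] at this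

lemma CDconj_neg : ∀ n (x : CD n), CDconj n (CDneg n x) = CDneg n (CDconj n x)
  | 0, x => by simp [CDconj, CDneg]
  | n+1, x => by simp [CDconj_succ, CDneg_succ, CDconj_neg n]

lemma CDneg_add : ∀ n (x y : CD n), CDneg n (CDadd n x y) = CDadd n (CDneg n x) (CDneg n y)
  | 0, x, y => by simp [CDadd, CDneg]; ring
  | n+1, x, y => by simp [CDadd_succ, CDneg_succ, CDneg_add n]

lemma CDneg_mul_both : ∀ n (x y : CD n),
    CDmul n (CDneg n x) y = CDneg n (CDmul n x y) ∧
    CDmul n x (CDneg n y) = CDneg n (CDmul n x y)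
  | 0, x, y => by
    constructor <;> (simp only [CDmul, CDneg]; ring)
  | n+1, x, y => by
    constructor <;>
      simp [CDmul_succ, CDneg_succ, CDconj_neg n, CDneg_add n, CDneg_neg n,
        (CDneg_mul_both n _ _).1, (CDneg_mul_both n _ _).2]

lemma CDneg_mul (n : ℕ) (x y : CD n) : CDmul n (CDneg n x) y = CDneg n (CDmul n x y) :=
  (CDneg_mul_both n x y).1

lemma CDmul_neg (n : ℕ) (x y : CD n) : CDmul n x (CDneg n y) = CDneg n (CDmul n x y) :=
  (CDneg_mul_both n x y).2

lemma CDunit_lo (n k : ℕ) (h : k < 2^n) :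
    CDunit (n+1) k = ((CDunit n k, CDzero n) : CD (n+1)) := by
  simp [CDunit, h]

lemma CDunit_hi (n k : ℕ) (h : ¬ k < 2^n) :
    CDunit (n+1) k = ((CDzero n, CDunit n (k - 2^n)) : CD (n+1)) := by
  simp [CDunit, h]

lemma CDconj_one : ∀ n, CDconj n (CDunit n 0) = CDunit n 0
  | 0 => by simp [CDconj, CDunit]
  | n+1 => by
    rw [CDunit_lo n 0 (Nat.pow_pos (by norm_num)), CDconj_succ]
    simp [CDconj_one n, CDneg_zero]

lemma CDone_mul_both : ∀ n (x : CD n),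
    CDmul n (CDunit n 0) x = x ∧ CDmul n x (CDunit n 0) = x
  | 0, x => by constructor <;> simp [CDmul, CDunit]
  | n+1, x => by
    rw [CDunit_lo n 0 (Nat.pow_pos (by norm_num))]
    constructor <;>
      simp [CDmul_succ, (CDone_mul_both n _).1, (CDone_mul_both n _).2,
        CDmul_zero, CDzero_mul, CDconj_zero, CDconj_one n, CDneg_zero,
        CDadd_zero, CDzero_add]

lemma CDone_mul (n : ℕ) (x : CD n) : CDmul n (CDunit n 0) x = x :=
  (CDone_mul_both n x).1

lemma CDmul_one (n : ℕ) (x : CD n) : CDmul n x (CDunit n 0) = x :=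
  (CDone_mul_both n x).2

lemma CDconj_unit : ∀ n k, 0 < k → k < 2^n → CDconj n (CDunit n k) = CDneg n (CDunit n k)
  | 0, k, hk, hk2 => by omega
  | n+1, k, hk, hk2 => by
    by_cases h : k < 2^n
    · rw [CDunit_lo n k h, CDconj_succ, CDneg_succ]
      simp [CDconj_unit n k hk h, CDneg_zero]
    · rw [CDunit_hi n k h, CDconj_succ, CDneg_succ]
      simp [CDconj_zero, CDneg_zero]

/-- lo half times lo half. -/
lemma CDmul_ll (n : ℕ) (u v : CD n) :
    CDmul (n+1) ((u, CDzero n) : CD (n+1)) ((v, CDzero n) : CD (n+1))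
      = ((CDmul n u v, CDzero n) : CD (n+1)) := by
  rw [CDmul_succ]
  simp [CDconj_zero, CDneg_zero, CDzero_mul, CDmul_zero, CDadd_zero, CDzero_add]

/-- lo half times hi half. -/
lemma CDmul_lh (n : ℕ) (u v : CD n) :
    CDmul (n+1) ((u, CDzero n) : CD (n+1)) ((CDzero n, v) : CD (n+1))
      = ((CDzero n, CDmul n v u) : CD (n+1)) := by
  rw [CDmul_succ]
  simp [CDconj_zero, CDneg_zero, CDzero_mul, CDmul_zero, CDadd_zero, CDzero_add]

/-- hi half times lo half. -/
lemma CDmul_hl (n : ℕ) (u v : CD n) :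
    CDmul (n+1) ((CDzero n, u) : CD (n+1)) ((v, CDzero n) : CD (n+1))
      = ((CDzero n, CDmul n u (CDconj n v)) : CD (n+1)) := by
  rw [CDmul_succ]
  simp [CDconj_zero, CDneg_zero, CDzero_mul, CDmul_zero, CDadd_zero, CDzero_add]

/-- hi half times hi half. -/
lemma CDmul_hh (n : ℕ) (u v : CD n) :
    CDmul (n+1) ((CDzero n, u) : CD (n+1)) ((CDzero n, v) : CD (n+1))
      = ((CDneg n (CDmul n (CDconj n v) u), CDzero n) : CD (n+1)) := by
  rw [CDmul_succ]
  simp [CDconj_zero, CDneg_zero, CDzero_mul, CDmul_zero, CDadd_zero, CDzero_add]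

/-- Sand-mandala computation in the 32-D Pathions (`G = 16`, `g = 8`): for a
strut constant `S = 8 + s` with `0 < s < 8`, if `(f, a, s)` is a CPO
associative Octonion trip with `a, f < 8` and `f = a XOR s` (a Sedenion
strut), then `(i_f + i_{16+8+a})(i_8 - i_{16+s}) = 0`. -/
theorem pathion_sand_mandala (s a f : ℕ) (hs0 : 0 < s) (hs : s < 8)
    (ha : a < 8) (hf : f < 8) (hfa : f = a ^^^ s) (h : IsCPO 5 f a s) :
    CDmul 5 (CDadd 5 (CDunit 5 f) (CDunit 5 (16 + 8 + a)))
      (CDsub 5 (CDunit 5 8) (CDunit 5 (16 + s))) = CDzero 5 := by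
  obtain ⟨h1, h2, h3⟩ := h
  have p8 : (2:ℕ)^3 = 8 := by norm_num
  have p16 : (2:ℕ)^4 = 16 := by norm_num
  have embed : ∀ k, k < 8 →
      CDunit 5 k = ((((CDunit 3 k, CDzero 3) : CD 4), (CDzero 4 : CD 4)) : CD 5) := by
    intro k hk
    rw [CDunit_lo 4 k (by rw [p16]; omega), CDunit_lo 3 k (by rw [p8]; omega)]
  have embmul : ∀ j k, j < 8 → k < 8 →
      CDmul 5 (CDunit 5 j) (CDunit 5 k)
        = ((((CDmul 3 (CDunit 3 j) (CDunit 3 k), CDzero 3) : CD 4), (CDzero 4 : CD 4)) : CD 5) := by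
    intro j k hj hk
    rw [embed j hj, embed k hk, CDmul_ll, CDmul_ll]
  have h2' : CDmul 3 (CDunit 3 a) (CDunit 3 s) = CDunit 3 f := by
    have := (embmul a s ha (by omega)).symm.trans (h2.trans (embed f hf))
    exact congrArg (fun z => z.1.1) this
  have h3' : CDmul 3 (CDunit 3 s) (CDunit 3 f) = CDunit 3 a := by
    have := (embmul s f (by omega) hf).symm.trans (h3.trans (embed a ha))
    exact congrArg (fun z => z.1.1) this
  have hconjs : CDconj 3 (CDunit 3 s) = CDneg 3 (CDunit 3 s) :=
    CDconj_unit 3 s hs0 (by rw [p8]; omega)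
  have ua : CDunit 5 (16 + 8 + a)
      = (((CDzero 4 : CD 4), ((CDzero 3, CDunit 3 a) : CD 4)) : CD 5) := by
    rw [CDunit_hi 4 (16+8+a) (by rw [p16]; omega)]
    congr 1
    rw [show 16 + 8 + a - 2^4 = 8 + a by rw [p16]; omega,
      CDunit_hi 3 (8+a) (by rw [p8]; omega),
      show 8 + a - 2^3 = a by rw [p8]; omega]
  have u8 : CDunit 5 8 = ((((CDzero 3, CDunit 3 0) : CD 4), (CDzero 4 : CD 4)) : CD 5) := by
    rw [CDunit_lo 4 8 (by rw [p16]; omega), CDunit_hi 3 8 (by rw [p8]; omega)]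
    norm_num
  have us : CDunit 5 (16 + s)
      = (((CDzero 4 : CD 4), ((CDunit 3 s, CDzero 3) : CD 4)) : CD 5) := by
    rw [CDunit_hi 4 (16+s) (by rw [p16]; omega)]
    congr 1
    rw [show 16 + s - 2^4 = s by rw [p16]; omega, CDunit_lo 3 s (by rw [p8]; omega)]
  have hX : CDadd 5 (CDunit 5 f) (CDunit 5 (16 + 8 + a))
      = ((((CDunit 3 f, CDzero 3) : CD 4), ((CDzero 3, CDunit 3 a) : CD 4)) : CD 5) := by
    rw [embed f hf, ua, CDadd_succ]
    simp only [Prod.fst, Prod.snd]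
    rw [CDadd_zero, CDzero_add]
  have hY : CDsub 5 (CDunit 5 8) (CDunit 5 (16 + s))
      = ((((CDzero 3, CDunit 3 0) : CD 4),
          ((CDneg 3 (CDunit 3 s), CDzero 3) : CD 4)) : CD 5) := by
    rw [CDsub, u8, us, CDneg_succ, CDadd_succ]
    simp only [Prod.fst, Prod.snd]
    rw [CDneg_zero, CDadd_zero, CDzero_add,
      show CDneg 4 ((CDunit 3 s, CDzero 3) : CD 4)
        = ((CDneg 3 (CDunit 3 s), CDneg 3 (CDzero 3)) : CD 4) from rfl, CDneg_zero]
  rw [hX, hY, CDmul_succ]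
  simp only [Prod.fst, Prod.snd]
  rw [CDmul_lh,
    show CDconj 4 ((CDneg 3 (CDunit 3 s), CDzero 3) : CD 4)
      = ((CDconj 3 (CDneg 3 (CDunit 3 s)), CDneg 3 (CDzero 3)) : CD 4) from rfl,
    CDconj_neg, hconjs, CDneg_neg, CDneg_zero, CDmul_lh, h2',
    CDone_mul, CDneg_succ]
  simp only [Prod.fst, Prod.snd]
  rw [CDneg_zero, CDadd_succ]
  simp only [Prod.fst, Prod.snd]
  rw [CDadd_neg, CDadd_zero]
  have q1 : CDmul 4 ((CDneg 3 (CDunit 3 s), CDzero 3) : CD 4)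
      ((CDunit 3 f, CDzero 3) : CD 4)
      = ((CDneg 3 (CDunit 3 a), CDzero 3) : CD 4) := by
    rw [CDmul_ll, CDneg_mul, h3']
  have q2 : CDmul 4 ((CDzero 3, CDunit 3 a) : CD 4)
      (CDconj 4 ((CDzero 3, CDunit 3 0) : CD 4))
      = ((CDunit 3 a, CDzero 3) : CD 4) := by
    rw [show CDconj 4 ((CDzero 3, CDunit 3 0) : CD 4)
      = ((CDconj 3 (CDzero 3), CDneg 3 (CDunit 3 0)) : CD 4) from rfl]
    rw [CDconj_zero, CDmul_hh, CDconj_neg, CDconj_one, CDneg_mul, CDneg_neg, CDone_mul]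
  rw [q1, q2, CDadd_succ]
  simp only [Prod.fst, Prod.snd]
  rw [CDneg_add_self, CDadd_zero]
  rfl

end
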